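/- Let H be a Hopf algebra over a field and g, g' grouplike elements. If h is g-primitive and h' is g'-primitive with g ≠ g', and the families of skew-primitive spaces are considered, then the spaces L_g = {h : Δ(h) = h⊗1 + g⊗h} for distinct g ∈ G form a direct sum (i.e., are linearly independent subspaces) modulo the span of elements 1 - g. -/

import Mathlib

open Coalgebra TensorProduct

/-- An element `g` of a coalgebra is grouplike if `Δ g = g ⊗ g` and `ε g = 1`. -/
def IsGrouplike {k H : Type*} [CommSemiring k] [AddCommMonoid H] [Module k H]
    [Coalgebra k H] (g : H) : Prop :=
  comul (R := k) g = g ⊗ₜ[k] g ∧ counit (R := k) g = (1 : k)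

/-- The space `L_g = {h : Δ h = h ⊗ 1 + g ⊗ h}` of `g`-primitive (skew primitive)
elements, as the kernel of the linear map `h ↦ Δ h - (h ⊗ 1 + g ⊗ h)`. -/
noncomputable def skewPrimitive (k : Type*) {H : Type*} [CommRing k] [Ring H] [Algebra k H]
    [Coalgebra k H] (g : H) : Submodule k H :=
  LinearMap.ker ((Coalgebra.comul : H →ₗ[k] H ⊗[k] H) -
    ((TensorProduct.mk k H H).flip 1 + TensorProduct.mk k H H g))

section Aux

variable {k H : Type*} [Field k] [Ring H] [HopfAlgebra k H]

lemma mem_skewPrimitive_iff {g x : H} :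
    x ∈ skewPrimitive k g ↔ comul (R := k) x = x ⊗ₜ[k] (1 : H) + g ⊗ₜ[k] x := by
  simp only [skewPrimitive, LinearMap.mem_ker, LinearMap.sub_apply, LinearMap.add_apply,
    LinearMap.flip_apply, mk_apply, sub_eq_zero]

lemma isGrouplike_one : IsGrouplike (k := k) (1 : H) :=
  ⟨by rw [Bialgebra.comul_one, Algebra.TensorProduct.one_def], Bialgebra.counit_one (R := k)⟩

/-- Contraction of a tensor by a functional on the left factor. -/
noncomputable def contrL (φ : H →ₗ[k] k) (N : Type*) [AddCommGroup N] [Module k N] :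
    H ⊗[k] N →ₗ[k] N :=
  (TensorProduct.lid k N).toLinearMap ∘ₗ φ.rTensor N

@[simp] lemma contrL_tmul (φ : H →ₗ[k] k) {N : Type*} [AddCommGroup N] [Module k N]
    (a : H) (n : N) : contrL φ N (a ⊗ₜ[k] n) = φ a • n := rfl

/-- Distinct grouplike elements are linearly independent. -/
lemma grouplike_linearIndependent :
    LinearIndependent k (fun g : {g : H // IsGrouplike (k := k) g} => (g : H)) := by
  classical
  rw [linearIndependent_iff']
  suffices hmain : ∀ n (s : Finset {g : H // IsGrouplike (k := k) g})
      (c : {g : H // IsGrouplike (k := k) g} → k), s.card ≤ n →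
      (∑ u ∈ s, c u • (u : H)) = 0 → ∀ u ∈ s, c u = 0 by
    intro s c h; exact hmain s.card s c le_rfl h
  intro n
  induction n with
  | zero =>
    intro s c hcard hrel u hu
    rw [Nat.le_zero, Finset.card_eq_zero] at hcard
    simp [hcard] at hu
  | succ n ih =>
    intro s c hcard hrel
    rcases s.eq_empty_or_nonempty with rfl | ⟨j, hj⟩
    · simp
    have step : ∀ φ : H →ₗ[k] k, ∑ u ∈ s, (c u * (φ u - φ j)) • (u : H) = 0 := by
      intro φ
      have h1 : ∑ u ∈ s, c u • ((u : H) ⊗ₜ[k] (u : H)) = 0 := by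
        have h := congrArg (comul (R := k)) hrel
        rw [map_sum, map_zero] at h
        rw [← h]
        refine Finset.sum_congr rfl fun u _ => ?_
        rw [map_smul, u.2.1]
      have h2 : ∑ u ∈ s, (c u * φ u) • (u : H) = 0 := by
        have h := congrArg (contrL φ H) h1
        rw [map_sum, map_zero] at h
        rw [← h]
        refine Finset.sum_congr rfl fun u _ => ?_
        rw [map_smul, contrL_tmul, smul_smul]
      have h3 : ∑ u ∈ s, (c u * φ j) • (u : H) = 0 := by
        have h := congrArg (fun z => φ j • z) hrel
        simp only [Finset.smul_sum, smul_zero] at h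
        rw [← h]
        refine Finset.sum_congr rfl fun u _ => ?_
        rw [smul_smul, mul_comm (φ j)]
      calc ∑ u ∈ s, (c u * (φ u - φ j)) • (u : H)
          = ∑ u ∈ s, ((c u * φ u) • (u : H) - (c u * φ j) • (u : H)) := by
            refine Finset.sum_congr rfl fun u _ => ?_
            rw [mul_sub, sub_smul]
        _ = 0 := by rw [Finset.sum_sub_distrib, h2, h3, sub_zero]
    have hzero : ∀ u' ∈ s, u' ≠ j → c u' = 0 := by
      intro u' hu' hne
      by_contra hc
      have hsep : ∀ φ : Module.Dual k H, φ ((u' : H) - (j : H)) = 0 := by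
        intro φ
        have hrel' : ∑ u ∈ s.erase j, (c u * (φ u - φ j)) • (u : H) = 0 := by
          have := step φ
          rwa [← Finset.add_sum_erase s _ hj, sub_self, mul_zero, zero_smul, zero_add] at this
        have hcard' : (s.erase j).card ≤ n := by
          have := Finset.card_erase_of_mem hj
          omega
        have := ih (s.erase j) _ hcard' hrel' u' (Finset.mem_erase.mpr ⟨hne, hu'⟩)
        rcases mul_eq_zero.mp this with h | h
        · exact absurd h hc
        · rw [map_sub]; exact h
      have : (u' : H) - (j : H) = 0 := by
        rw [← Module.forall_dual_apply_eq_zero_iff k]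
        exact hsep
      exact hne (Subtype.ext (sub_eq_zero.mp this))
    have hjrel : c j • (j : H) = 0 := by
      have hsingle : ∑ u ∈ s, c u • (u : H) = c j • (j : H) :=
        Finset.sum_eq_single_of_mem j hj fun u hu hne => by rw [hzero u hu hne, zero_smul]
      rw [← hsingle, hrel]
    have hcj : c j = 0 := by
      have h : counit (R := k) (A := H) (c j • (j : H)) = counit (R := k) (A := H) (0 : H) := by rw [hjrel]
      rw [map_smul, j.2.2, map_zero, smul_eq_mul, mul_one] at h
      exact h
    intro u hu
    by_cases h : u = j
    · rw [h]; exact hcj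
    · exact hzero u hu h

/-- Delta functionals on grouplike elements. -/
lemma exists_delta [DecidableEq H] (g₀ : {g : H // IsGrouplike (k := k) g}) :
    ∃ φ : H →ₗ[k] k, ∀ u : {g : H // IsGrouplike (k := k) g},
      φ u = if u = g₀ then 1 else 0 := by
  have li := (grouplike_linearIndependent (k := k) (H := H)).linearIndepOn_id
  have hmem : (g₀ : H) ∈ li.extend (Set.subset_univ _) :=
    li.subset_extend _ ⟨g₀, rfl⟩
  refine ⟨(Module.Basis.extend li).coord ⟨(g₀ : H), hmem⟩, fun u => ?_⟩
  have humem : (u : H) ∈ li.extend (Set.subset_univ _) :=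
    li.subset_extend _ ⟨u, rfl⟩
  have h1 : (Module.Basis.extend li) ⟨(u : H), humem⟩ = (u : H) :=
    Module.Basis.extend_apply_self li ⟨(u : H), humem⟩
  rw [← h1, Module.Basis.coord_apply, Module.Basis.repr_self, Finsupp.single_apply]
  by_cases h : u = g₀
  · subst h
    simp
  · have hne : (⟨(u : H), humem⟩ : li.extend (Set.subset_univ _)) ≠ ⟨(g₀ : H), hmem⟩ := by
      intro hh
      exact h (Subtype.ext (Subtype.mk_eq_mk.mp hh))
    rw [if_neg hne, if_neg h]

/-- If a sum `∑ g ⊗ y g` over distinct grouplikes vanishes, each `y g` vanishes. -/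
lemma tensor_kill [DecidableEq H] {N : Type*} [AddCommGroup N] [Module k N]
    (s : Finset {g : H // IsGrouplike (k := k) g})
    (y : {g : H // IsGrouplike (k := k) g} → N)
    (h : ∑ u ∈ s, (u : H) ⊗ₜ[k] y u = 0) : ∀ u ∈ s, y u = 0 := by
  intro g₀ hg₀
  obtain ⟨φ, hφ⟩ := exists_delta g₀
  have h2 := congrArg (contrL φ N) h
  rw [map_sum, map_zero] at h2
  have h3 : ∀ u ∈ s, contrL φ N ((u : H) ⊗ₜ[k] y u) = if u = g₀ then y u else 0 := by
    intro u _
    rw [contrL_tmul, hφ u, ite_smul, one_smul, zero_smul]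
  rwa [Finset.sum_congr rfl h3, Finset.sum_ite_eq' s g₀ y, if_pos hg₀] at h2

/-- A skew primitive element lying in the span of grouplikes is a multiple of `g - 1`. -/
lemma skewPrimitive_mem_span_grouplike [DecidableEq H] {g : {g : H // IsGrouplike (k := k) g}} {x : H}
    (hx : x ∈ skewPrimitive k (g : H))
    (hxW : x ∈ Submodule.span k
      (Set.range (fun u : {g : H // IsGrouplike (k := k) g} => (u : H)))) :
    ∃ c : k, x = c • ((g : H) - 1) := by
  classical
  rw [Finsupp.mem_span_range_iff_exists_finsupp] at hxW
  obtain ⟨c, hc⟩ := hxW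
  rw [Finsupp.sum] at hc
  have hx' := mem_skewPrimitive_iff.mp hx
  set t := insert g c.support with ht
  have e1 : ∑ u ∈ t, (u : H) ⊗ₜ[k] (c u • (u : H)) = comul (R := k) x := by
    have : ∀ u ∈ t, (u : H) ⊗ₜ[k] (c u • (u : H)) = comul (R := k) (c u • (u : H)) := by
      intro u _
      rw [tmul_smul, ← u.2.1, ← map_smul]
    rw [Finset.sum_congr rfl this, ← map_sum, ht,
      Finset.sum_insert_of_eq_zero_if_notMem (fun hg => by
        rw [Finsupp.notMem_support_iff.mp hg, zero_smul]), hc]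
  have e2 : ∑ u ∈ t, (u : H) ⊗ₜ[k] (c u • (1 : H)) = x ⊗ₜ[k] (1 : H) := by
    have : ∀ u ∈ t, (u : H) ⊗ₜ[k] (c u • (1 : H)) = (c u • (u : H)) ⊗ₜ[k] (1 : H) := by
      intro u _
      rw [← smul_tmul]
    rw [Finset.sum_congr rfl this, ← sum_tmul, ht,
      Finset.sum_insert_of_eq_zero_if_notMem (fun hg => by
        rw [Finsupp.notMem_support_iff.mp hg, zero_smul]), hc]
  have e3 : ∑ u ∈ t, (u : H) ⊗ₜ[k] (if u = g then x else 0) = (g : H) ⊗ₜ[k] x := by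
    have : ∀ u ∈ t, (u : H) ⊗ₜ[k] (if u = g then x else 0)
        = (if u = g then (u : H) ⊗ₜ[k] x else 0) := by
      intro u _
      by_cases h : u = g <;> simp [h, tmul_zero]
    rw [Finset.sum_congr rfl this, Finset.sum_ite_eq' t g (fun u : _ => (u : H) ⊗ₜ[k] x),
      if_pos (Finset.mem_insert_self g _)]
  have key : ∑ u ∈ t, (u : H) ⊗ₜ[k]
      ((c u • (u : H)) - c u • (1 : H) - (if u = g then x else 0)) = 0 := by
    have expand : ∀ u ∈ t, (u : H) ⊗ₜ[k]
        ((c u • (u : H)) - c u • (1 : H) - (if u = g then x else 0))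
        = (u : H) ⊗ₜ[k] (c u • (u : H)) - (u : H) ⊗ₜ[k] (c u • (1 : H))
          - (u : H) ⊗ₜ[k] (if u = g then x else 0) := by
      intro u _
      rw [tmul_sub, tmul_sub]
    rw [Finset.sum_congr rfl expand, Finset.sum_sub_distrib, Finset.sum_sub_distrib,
      e1, e2, e3, hx']
    abel
  have hg := tensor_kill t _ key g (Finset.mem_insert_self g _)
  rw [if_pos rfl] at hg
  refine ⟨c g, ?_⟩
  rw [smul_sub]
  exact (sub_eq_zero.mp hg).symm

/-- The key lemma: if a sum of skew primitives (over distinct grouplikes) lies in the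
span of the elements `1 - g`, then each summand does. -/
lemma key_lemma [DecidableEq H] (s : Finset {g : H // IsGrouplike (k := k) g})
    (x : {g : H // IsGrouplike (k := k) g} → H)
    (hx : ∀ g ∈ s, x g ∈ skewPrimitive k (g : H))
    (hsum : (∑ g ∈ s, x g) ∈ Submodule.span k
      {x : H | ∃ g' : H, IsGrouplike (k := k) g' ∧ x = 1 - g'}) :
    ∀ g ∈ s, x g ∈ Submodule.span k
      {x : H | ∃ g' : H, IsGrouplike (k := k) g' ∧ x = 1 - g'} := by
  classical
  set W : Submodule k H := Submodule.span k
    (Set.range (fun u : {g : H // IsGrouplike (k := k) g} => (u : H))) with hW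
  have hgW : ∀ u : {g : H // IsGrouplike (k := k) g}, (u : H) ∈ W := fun u =>
    Submodule.subset_span ⟨u, rfl⟩
  have h1W : (1 : H) ∈ W := hgW ⟨1, isGrouplike_one⟩
  have hSW : Submodule.span k {x : H | ∃ g' : H, IsGrouplike (k := k) g' ∧ x = 1 - g'} ≤ W := by
    rw [Submodule.span_le]
    rintro _ ⟨g', hg', rfl⟩
    exact sub_mem h1W (hgW ⟨g', hg'⟩)
  set q := W.mkQ with hq
  set T : H →ₗ[k] H ⊗[k] (H ⧸ W) :=
    (LinearMap.lTensor H q) ∘ₗ (comul : H →ₗ[k] H ⊗[k] H) with hT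
  have hq0 : ∀ w ∈ W, q w = 0 := fun w hw => (Submodule.Quotient.mk_eq_zero W).mpr hw
  have hTW : ∀ w ∈ W, T w = 0 := by
    intro w hw
    refine Submodule.span_induction ?_ ?_ ?_ ?_ hw
    · rintro _ ⟨u, rfl⟩
      rw [hT, LinearMap.comp_apply, u.2.1, LinearMap.lTensor_tmul, hq0 _ (hgW u), tmul_zero]
    · simp
    · intro a b _ _ ha hb; rw [map_add, ha, hb, add_zero]
    · intro a b _ hb; rw [map_smul, hb, smul_zero]
  have hTx : ∀ g ∈ s, T (x g) = (g : H) ⊗ₜ[k] (q (x g)) := by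
    intro g hg
    have hxg := mem_skewPrimitive_iff.mp (hx g hg)
    rw [hT, LinearMap.comp_apply, hxg, map_add, LinearMap.lTensor_tmul, LinearMap.lTensor_tmul,
      hq0 1 h1W, tmul_zero, zero_add]
  have hsum0 : ∑ g ∈ s, (g : H) ⊗ₜ[k] (q (x g)) = 0 := by
    rw [← Finset.sum_congr rfl hTx, ← map_sum]
    exact hTW _ (hSW hsum)
  intro g hg
  have hqx : q (x g) = 0 := tensor_kill s _ hsum0 g hg
  have hxW : x g ∈ W := (Submodule.Quotient.mk_eq_zero W).mp hqx
  obtain ⟨c, hc⟩ := skewPrimitive_mem_span_grouplike (hx g hg) hxW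
  rw [hc, ← neg_sub (1 : H) (g : H), smul_neg]
  exact neg_mem (Submodule.smul_mem _ c (Submodule.subset_span ⟨g, g.2, rfl⟩))

end Aux

/-- Modulo the span of the elements `1 - g` for `g` grouplike, the skew primitive
spaces `L_g` for distinct grouplike `g` form a direct sum (are independent). -/
theorem skewPrimitive_independent_mod_span
    {k H : Type*} [Field k] [Ring H] [HopfAlgebra k H] :
    iSupIndep (fun g : {g : H // IsGrouplike (k := k) g} =>
      (skewPrimitive k (g : H)).map
        (Submodule.span k {x : H | ∃ g' : H, IsGrouplike (k := k) g' ∧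
          x = 1 - g'}).mkQ) := by
  classical
  set S : Submodule k H := Submodule.span k {x : H | ∃ g' : H, IsGrouplike (k := k) g' ∧
    x = 1 - g'} with hS
  rw [iSupIndep_iff_forall_dfinsupp]
  intro i x v hv
  set w := DFinsupp.erase i v with hw
  have hlift : ∀ j : {g : H // IsGrouplike (k := k) g},
      ∃ a, a ∈ skewPrimitive k (j : H) ∧ S.mkQ a = ↑(w j) := by
    intro j
    obtain ⟨a, ha, ha'⟩ := Submodule.mem_map.mp (w j).2
    exact ⟨a, ha, ha'⟩
  choose b hb1 hb2 using hlift
  obtain ⟨a, ha, ha'⟩ := Submodule.mem_map.mp x.2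
  have hsumq : (x : H ⧸ S) = ∑ j ∈ w.support, ((w j : H ⧸ S)) := by
    rw [← hv, DFinsupp.lsum_apply_apply, DFinsupp.sumAddHom_apply]
    rfl
  have hins : i ∉ w.support := by
    rw [hw, DFinsupp.support_erase]
    exact Finset.notMem_erase i _
  set y : {g : H // IsGrouplike (k := k) g} → H := fun j => if j = i then a else -(b j) with hy
  have hymem : ∀ j ∈ insert i w.support, y j ∈ skewPrimitive k (j : H) := by
    intro j _
    by_cases h : j = i
    · subst h; rw [hy]; simpa using ha
    · rw [hy]; simp only [h, if_false]; exact neg_mem (hb1 j)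
  have hysum : (∑ j ∈ insert i w.support, y j) ∈ S := by
    rw [Finset.sum_insert hins]
    have h1 : y i = a := by rw [hy]; simp
    have h2 : ∑ j ∈ w.support, y j = -∑ j ∈ w.support, b j := by
      rw [← Finset.sum_neg_distrib]
      refine Finset.sum_congr rfl fun j hj => ?_
      have : j ≠ i := fun hji => hins (hji ▸ hj)
      rw [hy]; simp [this]
    rw [h1, h2, ← sub_eq_add_neg, ← Submodule.Quotient.mk_eq_zero S]
    have : S.mkQ (a - ∑ j ∈ w.support, b j) = 0 := by
      rw [map_sub, map_sum, ha']
      rw [Finset.sum_congr rfl fun j _ => hb2 j]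
      rw [← hsumq, sub_self]
    simpa using this
  have hfin : y i ∈ S := key_lemma (insert i w.support) y hymem hysum i
    (Finset.mem_insert_self i _)
  have hyi : y i = a := by rw [hy]; simp
  rw [hyi] at hfin
  have : (x : H ⧸ S) = 0 := by
    rw [← ha', Submodule.mkQ_apply, Submodule.Quotient.mk_eq_zero]
    exact hfin
  exact Subtype.ext this
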